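/- arXiv:0906.3652 — 3 statements merged into one kernel-verified Lean document; each statement's English description precedes it below -/
import Mathlib

section
/- The second factorial moment of the number of dimers is asymptotically (4/81)(N-1)(N-3): lim_{N→∞} [ Σ_{t=1}^{N} Σ_{s=1}^{⌊t/2⌋} s(s-1) · P̃_N(s,t) - (4/81)(N-1)(N-3) ] = 0. -/
/-- The hard-dimer probability weights `P̃_N(s,t)`:
`P̃_N(0,0) = (2/3)^{N-1}`,
`P̃_N(s,t) = (2/3)^{N-1} · C(N-t+s, s) · C(t-s-1, s-1) · 2^{-(t-s)}`
for `1 ≤ s ≤ ⌊t/2⌋` and `1 ≤ t ≤ N`, and `P̃_N(s,t) = 0` otherwise. -/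
noncomputable def Ptilde (N s t : ℕ) : ℝ :=
  if s = 0 ∧ t = 0 then (2 / 3 : ℝ) ^ (N - 1)
  else if 1 ≤ s ∧ s ≤ t / 2 ∧ 1 ≤ t ∧ t ≤ N then
    (2 / 3 : ℝ) ^ (N - 1) * ((N - t + s).choose s : ℝ)
      * ((t - s - 1).choose (s - 1) : ℝ) * (1 / 2 : ℝ) ^ (t - s)
  else 0

open Finset


lemma lemB (n j : ℕ) :
    (j+2)*(j+1)*(n.choose (j+2)) = n*(n-1)*((n-2).choose j) := by
  match n with
  | 0 => simp
  | 1 => simp [Nat.choose_eq_zero_of_lt (by omega : 1 < j+2)]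
  | (k+2) =>
    have h1 : (k+1) * k.choose j = (k+1).choose (j+1) * (j+1) :=
      Nat.add_one_mul_choose_eq k j
    have h2 : (k+2) * (k+1).choose (j+1) = (k+2).choose (j+2) * (j+2) :=
      Nat.add_one_mul_choose_eq (k+1) (j+1)
    have : (k+2)*(k+1)*(k.choose j) = (j+2)*(j+1)*((k+2).choose (j+2)) := by
      calc (k+2)*(k+1)*(k.choose j) = (k+2)*((k+1) * k.choose j) := by ring
        _ = (k+2)*((k+1).choose (j+1) * (j+1)) := by rw [h1]
        _ = ((k+2)*(k+1).choose (j+1)) * (j+1) := by ring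
        _ = ((k+2).choose (j+2) * (j+2)) * (j+1) := by rw [h2]
        _ = (j+2)*(j+1)*((k+2).choose (j+2)) := by ring
    simpa using this.symm

lemma lemE (a k : ℕ) : (a - k) * a.choose k = a * ((a-1).choose k) := by
  match a with
  | 0 => simp [Nat.zero_sub]
  | (b+1) =>
    have h := Nat.choose_mul_succ_eq b k
    simpa [mul_comm] using h.symm

lemma lemC (a p K : ℕ) (hp : 1 ≤ p) (hpK : p ≤ K) :
    ∑ j ∈ range K, (a.choose j)*(p.choose (j+1)) = (a+p).choose (p-1) := by
  have hv := Nat.add_choose_eq a p (p-1)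
  rw [Finset.Nat.sum_antidiagonal_eq_sum_range_succ_mk] at hv
  have hp1 : (p-1).succ = p := by omega
  rw [hp1] at hv
  have step : ∀ i ∈ range p, a.choose i * p.choose (p-1-i) = a.choose i * p.choose (i+1) := by
    intro i hi
    simp only [mem_range] at hi
    have h1 : p-1-i = p - (i+1) := by omega
    rw [h1, Nat.choose_symm (by omega)]
  rw [Finset.sum_congr rfl step] at hv
  rw [hv]
  symm
  apply Finset.sum_subset (Finset.range_subset_range.mpr hpK)
  intro x _ hx
  simp only [mem_range, not_lt] at hx
  rw [Nat.choose_eq_zero_of_lt (by omega : p < x+1), mul_zero]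

lemma lemA (n p K : ℕ) (hp : 1 ≤ p) (hpK : p + 2 ≤ K) :
    ∑ s ∈ range K, s*(s-1)*(n.choose s)*(p.choose (s-1))
      = n*(n-1)*((n-2+p).choose (p-1)) := by
  have h1 : ∑ s ∈ range K, s*(s-1)*(n.choose s)*(p.choose (s-1))
      = ∑ s ∈ Ico 2 K, s*(s-1)*(n.choose s)*(p.choose (s-1)) := by
    symm
    apply Finset.sum_subset
    · intro x hx; simp only [mem_Ico] at hx; simp only [mem_range]; omega
    · intro x hx hx2
      simp only [mem_range] at hx
      simp only [mem_Ico, not_and, not_lt] at hx2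
      have : x ≤ 1 := by by_contra h; exact absurd hx (by omega)
      interval_cases x <;> simp
  rw [h1, Finset.sum_Ico_eq_sum_range]
  have step : ∀ j ∈ range (K-2), (2+j)*((2+j)-1)*(n.choose (2+j))*(p.choose ((2+j)-1))
      = n*(n-1)*((n-2).choose j * p.choose (j+1)) := by
    intro j _
    have e1 : (2+j) - 1 = j+1 := by omega
    have e2 : 2+j = j+2 := by omega
    rw [e1, e2, lemB n j]
    ring
  rw [Finset.sum_congr rfl step, ← Finset.mul_sum, lemC (n-2) p (K-2) hp (by omega)]

lemma lemF (a K : ℕ) (h : a < K) :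
    ∑ k ∈ range K, (1/2:ℝ)^k * (a.choose k : ℝ) = (3/2)^a := by
  have hb := add_pow (1/2 : ℝ) 1 a
  norm_num at hb
  rw [hb]
  symm
  apply Finset.sum_subset (Finset.range_subset_range.mpr (by omega))
  intro x _ hx
  simp only [mem_range, not_lt] at hx
  rw [Nat.choose_eq_zero_of_lt (by omega), Nat.cast_zero, mul_zero]

lemma lemD (M k : ℕ) :
    (M+1-k)*((M-k)*(M.choose k)) = M*((M-1)*((M-2).choose k)) + 2*(M*((M-1).choose k)) := by
  rw [lemE M k]
  rcases le_or_gt k M with h | h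
  · rcases Nat.lt_or_ge k M with h2 | h2
    · -- k ≤ M-1
      have e : M+1-k = (M-1-k) + 2 := by omega
      rw [e, add_mul]
      congr 1
      calc (M-1-k)*(M*((M-1).choose k)) = M*((M-1-k)*((M-1).choose k)) := by ring
        _ = M*((M-1)*((M-1-1).choose k)) := by rw [lemE (M-1) k]
        _ = M*((M-1)*((M-2).choose k)) := by
              have e2 : M-1-1 = M-2 := by omega
              rw [e2]
    · rcases Nat.eq_zero_or_pos M with h0 | h0
      · subst h0
        have : k = 0 := by omega
        subst this
        simp
      · rw [Nat.choose_eq_zero_of_lt (show M-1 < k by omega),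
            Nat.choose_eq_zero_of_lt (show M-2 < k by omega)]
        simp
  · rw [Nat.choose_eq_zero_of_lt (by omega : M-1 < k),
        Nat.choose_eq_zero_of_lt (by omega : M-2 < k)]
    simp

noncomputable def gg (N s t : ℕ) : ℝ :=
  ((s*(s-1) * ((N-t+s).choose s) * ((t-s-1).choose (s-1)) : ℕ) : ℝ) * (1/2:ℝ)^(t-s)

noncomputable def GG (N s m : ℕ) : ℝ :=
  ((s*(s-1) * ((N-m).choose s) * ((m-1).choose (s-1)) : ℕ) : ℝ) * (1/2:ℝ)^m

lemma step1 (N : ℕ) :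
    (∑ t ∈ Finset.Icc 1 N, ∑ s ∈ Finset.Icc 1 (t / 2),
        (s : ℝ) * ((s : ℝ) - 1) * Ptilde N s t)
    = (2/3:ℝ)^(N-1) * ∑ t ∈ Finset.Icc 1 N, ∑ s ∈ Finset.Icc 1 (t / 2), gg N s t := by
  rw [Finset.mul_sum]
  apply Finset.sum_congr rfl
  intro t ht
  rw [Finset.mul_sum]
  apply Finset.sum_congr rfl
  intro s hs
  simp only [mem_Icc] at ht hs
  have hs1 : 1 ≤ s := hs.1
  rw [Ptilde, if_neg (by omega), if_pos ⟨hs.1, hs.2, ht.1, ht.2⟩, gg]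
  push_cast [Nat.cast_sub hs1]
  ring

lemma gg_zero {N s t : ℕ} (h : s ≤ 1 ∨ (2 ≤ s ∧ t < 2*s)) : gg N s t = 0 := by
  rw [gg]
  rcases h with h | ⟨h2, hlt⟩
  · interval_cases s <;> simp
  · rw [Nat.choose_eq_zero_of_lt (show t-s-1 < s-1 by omega)]
    simp

lemma GG_zero {N s m : ℕ} (h : s ≤ 1 ∨ (2 ≤ s ∧ N - m < s) ∨ (2 ≤ s ∧ m ≤ 1)) :
    GG N s m = 0 := by
  rw [GG]
  rcases h with h | ⟨h2, hlt⟩ | ⟨h2, hm⟩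
  · interval_cases s <;> simp
  · rw [Nat.choose_eq_zero_of_lt hlt]; simp
  · have : m - 1 = 0 := by omega
    rw [this, Nat.choose_eq_zero_of_lt (show 0 < s - 1 by omega)]
    simp

lemma step2 (N : ℕ) :
    (∑ t ∈ Finset.Icc 1 N, ∑ s ∈ Finset.Icc 1 (t / 2), gg N s t)
    = ∑ t ∈ Finset.range (N+1), ∑ s ∈ Finset.range (N+1), gg N s t := by
  have hrow : ∀ t, t ≤ N → (∑ s ∈ Finset.Icc 1 (t / 2), gg N s t)
      = ∑ s ∈ Finset.range (N+1), gg N s t := by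
    intro t ht
    apply Finset.sum_subset
    · intro x hx
      simp only [mem_Icc] at hx
      simp only [mem_range]
      omega
    · intro x hx hnx
      simp only [mem_range] at hx
      simp only [mem_Icc, not_and, not_le] at hnx
      rcases Nat.lt_or_ge x 2 with h | h
      · exact gg_zero (Or.inl (by omega))
      · exact gg_zero (Or.inr ⟨h, by omega⟩)
  rw [Finset.sum_congr rfl (fun t ht => hrow t (by simp only [mem_Icc] at ht; omega))]
  apply Finset.sum_subset
  · intro x hx; simp only [mem_Icc] at hx; simp only [mem_range]; omega
  · intro t ht hnt
    simp only [mem_range] at ht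
    simp only [mem_Icc, not_and, not_le] at hnt
    have ht0 : t = 0 := by omega
    subst ht0
    apply Finset.sum_eq_zero
    intro s _
    rcases Nat.lt_or_ge s 2 with h | h
    · exact gg_zero (Or.inl (by omega))
    · exact gg_zero (Or.inr ⟨h, by omega⟩)

lemma step3 (N : ℕ) :
    (∑ t ∈ Finset.range (N+1), ∑ s ∈ Finset.range (N+1), gg N s t)
    = ∑ m ∈ Finset.range (N+1), ∑ s ∈ Finset.range (N+1), GG N s m := by
  rw [Finset.sum_comm]
  rw [show (∑ m ∈ Finset.range (N+1), ∑ s ∈ Finset.range (N+1), GG N s m)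
      = ∑ s ∈ Finset.range (N+1), ∑ m ∈ Finset.range (N+1), GG N s m from Finset.sum_comm]
  apply Finset.sum_congr rfl
  intro s hs
  simp only [mem_range] at hs
  rcases Nat.lt_or_ge s 2 with hs2 | hs2
  · rw [Finset.sum_eq_zero (fun t _ => gg_zero (Or.inl (by omega))),
        Finset.sum_eq_zero (fun m _ => GG_zero (Or.inl (by omega)))]
  · have hdrop : (∑ t ∈ Finset.range (N+1), gg N s t)
        = ∑ t ∈ Finset.Ico s (N+1), gg N s t := by
      symm
      apply Finset.sum_subset
      · intro x hx; simp only [mem_Ico] at hx; simp only [mem_range]; omega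
      · intro x hx hnx
        simp only [mem_range] at hx
        simp only [mem_Ico, not_and, not_le, not_lt] at hnx
        exact gg_zero (Or.inr ⟨hs2, by omega⟩)
    rw [hdrop, Finset.sum_Ico_eq_sum_range]
    have hpt : ∀ m ∈ Finset.range (N+1-s), gg N s (s+m) = GG N s m := by
      intro m hm
      simp only [mem_range] at hm
      rw [gg, GG]
      have e3 : N-(s+m)+s = N-m := by omega
      have e2 : s+m-s-1 = m-1 := by omega
      have e1 : s+m-s = m := by omega
      rw [e3, e2, e1]
    rw [Finset.sum_congr rfl hpt]
    apply Finset.sum_subset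
    · intro x hx; simp only [mem_range] at hx ⊢; omega
    · intro x hx hnx
      simp only [mem_range, not_lt] at hx hnx
      exact GG_zero (Or.inr (Or.inl ⟨hs2, by omega⟩))

lemma step4 (N : ℕ) (hN : 5 ≤ N) :
    (∑ m ∈ Finset.range (N+1), ∑ s ∈ Finset.range (N+1), GG N s m)
    = ∑ m ∈ Finset.Icc 2 N,
        (((N-m)*(N-m-1)*((N-3).choose (m-2)) : ℕ) : ℝ) * (1/2:ℝ)^m := by
  have hres : (∑ m ∈ Finset.range (N+1), ∑ s ∈ Finset.range (N+1), GG N s m)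
      = ∑ m ∈ Finset.Icc 2 N, ∑ s ∈ Finset.range (N+1), GG N s m := by
    symm
    apply Finset.sum_subset
    · intro x hx; simp only [mem_Icc] at hx; simp only [mem_range]; omega
    · intro m hm hnm
      simp only [mem_range] at hm
      simp only [mem_Icc, not_and, not_le] at hnm
      apply Finset.sum_eq_zero
      intro s _
      rcases Nat.lt_or_ge s 2 with h | h
      · exact GG_zero (Or.inl (by omega))
      · exact GG_zero (Or.inr (Or.inr ⟨h, by omega⟩))
  rw [hres]
  apply Finset.sum_congr rfl
  intro m hm
  simp only [mem_Icc] at hm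
  have hrow : (∑ s ∈ Finset.range (N+1), GG N s m)
      = ((∑ s ∈ Finset.range (N+1),
          s*(s-1) * ((N-m).choose s) * ((m-1).choose (s-1)) : ℕ) : ℝ) * (1/2:ℝ)^m := by
    rw [Nat.cast_sum, Finset.sum_mul]
    rfl
  rw [hrow, lemA (N-m) (m-1) (N+1) (by omega) (by omega)]
  rcases le_or_gt m (N-2) with hle | hlt
  · have e1 : N-m-2+(m-1) = N-3 := by omega
    have e2 : m-1-1 = m-2 := by omega
    rw [e1, e2]
  · have h0 : N-m-1 = 0 ∨ N-m = 0 := by omega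
    rcases h0 with h0 | h0 <;> rw [h0] <;> simp

lemma step5 (N : ℕ) (hN : 5 ≤ N) :
    (∑ m ∈ Finset.Icc 2 N,
        (((N-m)*(N-m-1)*((N-3).choose (m-2)) : ℕ) : ℝ) * (1/2:ℝ)^m)
    = (1/4:ℝ) * (((N-3:ℕ):ℝ) * ((N-4:ℕ):ℝ) * (3/2:ℝ)^(N-5)
        + 2 * ((N-3:ℕ):ℝ) * (3/2:ℝ)^(N-4)) := by
  rw [← Finset.Ico_add_one_right_eq_Icc, Finset.sum_Ico_eq_sum_range]
  have hpt : ∀ k ∈ Finset.range (N+1-2),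
      (((N-(2+k))*(N-(2+k)-1)*((N-3).choose (2+k-2)) : ℕ) : ℝ) * (1/2:ℝ)^(2+k)
      = (1/4:ℝ) * (((N-3:ℕ):ℝ) * ((N-4:ℕ):ℝ)) * ((1/2:ℝ)^k * ((N-5).choose k : ℝ))
        + (1/4:ℝ) * (2 * ((N-3:ℕ):ℝ)) * ((1/2:ℝ)^k * ((N-4).choose k : ℝ)) := by
    intro k hk
    have e1 : 2+k-2 = k := by omega
    have e2 : N-(2+k) = (N-3)+1-k := by omega
    have e3 : N-(2+k)-1 = (N-3)-k := by omega
    rw [e1, e3, e2, mul_assoc ((N-3)+1-k), lemD (N-3) k]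
    have e4 : N-3-1 = N-4 := by omega
    have e5 : N-3-2 = N-5 := by omega
    rw [e4, e5]
    have e6 : (1/2:ℝ)^(2+k) = (1/4) * (1/2)^k := by
      rw [pow_add]; norm_num
    rw [e6]
    push_cast
    ring
  rw [Finset.sum_congr rfl hpt, Finset.sum_add_distrib, ← Finset.mul_sum, ← Finset.mul_sum,
      lemF (N-5) (N+1-2) (by omega), lemF (N-4) (N+1-2) (by omega)]
  ring


lemma main_eq (N : ℕ) (hN : 5 ≤ N) :
    (∑ t ∈ Finset.Icc 1 N, ∑ s ∈ Finset.Icc 1 (t / 2),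
        (s : ℝ) * ((s : ℝ) - 1) * Ptilde N s t)
    = 4 / 81 * ((N : ℝ) - 1) * ((N : ℝ) - 3) := by
  rw [step1, step2, step3, step4 N hN, step5 N hN]
  obtain ⟨n, rfl⟩ : ∃ n, N = n + 5 := ⟨N - 5, by omega⟩
  have e1 : n+5-1 = n+4 := by omega
  have e2 : n+5-3 = n+2 := by omega
  have e3 : n+5-4 = n+1 := by omega
  have e4 : n+5-5 = n := by omega
  rw [e1, e2, e3, e4]
  have hkey : (2/3:ℝ)^n * (3/2:ℝ)^n = 1 := by rw [← mul_pow]; norm_num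
  push_cast
  linear_combination (4/81 * ((n:ℝ)+2) * ((n:ℝ)+4)) * hkey

/-- the second factorial moment of the number of dimers is
asymptotically `(4/81)(N-1)(N-3)`. -/
theorem dimer_second_factorial_asymptotics :
    Filter.Tendsto
      (fun N : ℕ =>
        (∑ t ∈ Finset.Icc 1 N, ∑ s ∈ Finset.Icc 1 (t / 2),
            (s : ℝ) * ((s : ℝ) - 1) * Ptilde N s t)
          - 4 / 81 * ((N : ℝ) - 1) * ((N : ℝ) - 3))
      Filter.atTop (nhds 0) := by
  apply Filter.Tendsto.congr' ?_ (tendsto_const_nhds : Filter.Tendsto (fun _ : ℕ => (0:ℝ)) Filter.atTop (nhds 0))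
  filter_upwards [Filter.eventually_ge_atTop 5] with N hN
  rw [main_eq N hN, sub_self]
end

section
/- The variance of the number of dimers is asymptotically (2/81)(3N+1): lim_{N→∞} [ V_N - (2/81)(3N+1) ] = 0, where V_N := F_N + E_N - (E_N)², with E_N := Σ_{t=1}^{N} Σ_{s=1}^{⌊t/2⌋} s·P̃_N(s,t) and F_N := Σ_{t=1}^{N} Σ_{s=1}^{⌊t/2⌋} s(s-1)·P̃_N(s,t). In particular the distribution of the number of dimers is not asymptotically binomial, since its variance (2/27)N differs from (2/9)(7/9)N. -/
/-- `E_N`: the mean number of dimers. -/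
noncomputable def dimerMean (N : ℕ) : ℝ :=
  ∑ t ∈ Finset.Icc 1 N, ∑ s ∈ Finset.Icc 1 (t / 2), (s : ℝ) * Ptilde N s t

/-- `F_N`: the second factorial moment of the number of dimers. -/
noncomputable def dimerSecondFactorial (N : ℕ) : ℝ :=
  ∑ t ∈ Finset.Icc 1 N, ∑ s ∈ Finset.Icc 1 (t / 2), (s : ℝ) * ((s : ℝ) - 1) * Ptilde N s t

open Finset

lemma sum_Icc_one {M : Type*} [AddCommMonoid M] (n : ℕ) (f : ℕ → M) :
    ∑ i ∈ Finset.Icc 1 n, f i = ∑ k ∈ Finset.range n, f (k + 1) := by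
  rw [← Finset.Ico_add_one_right_eq_Icc, Finset.sum_Ico_eq_sum_range]
  simp [Nat.add_comm]

lemma vand_diag (a v : ℕ) :
    ∑ j ∈ Finset.range (v + 1), a.choose j * v.choose j = (a + v).choose v := by
  rw [Nat.add_choose_eq, Finset.Nat.sum_antidiagonal_eq_sum_range_succ_mk]
  refine Finset.sum_congr rfl fun k hk => ?_
  simp only [Finset.mem_range] at hk
  rw [Nat.choose_symm (by omega)]

lemma vand_shift (a v : ℕ) :
    ∑ j ∈ Finset.range (v + 1), a.choose j * (v + 1).choose (j + 1)
      = (a + v + 1).choose v := by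
  have : (a + v + 1) = a + (v + 1) := by omega
  rw [this, Nat.add_choose_eq, Finset.Nat.sum_antidiagonal_eq_sum_range_succ_mk]
  refine Finset.sum_congr rfl fun k hk => ?_
  simp only [Finset.mem_range] at hk
  congr 1
  rw [show v - k = (v + 1) - (k + 1) by omega, Nat.choose_symm (by omega)]

lemma inner_one (a v : ℕ) :
    ∑ s ∈ Finset.Icc 1 (v + 1), s * ((a + 1).choose s * v.choose (s - 1))
      = (a + 1) * (a + v).choose v := by
  rw [sum_Icc_one]
  have h : ∀ j, (j + 1) * ((a + 1).choose (j + 1) * v.choose (j + 1 - 1))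
      = (a + 1) * (a.choose j * v.choose j) := by
    intro j
    have h1 := Nat.add_one_mul_choose_eq a j
    simp only [Nat.succ_eq_add_one, Nat.add_sub_cancel]
    calc (j + 1) * ((a + 1).choose (j + 1) * v.choose j)
        = ((a + 1).choose (j + 1) * (j + 1)) * v.choose j := by ring
      _ = ((a + 1) * a.choose j) * v.choose j := by rw [← h1]
      _ = (a + 1) * (a.choose j * v.choose j) := by ring
  rw [Finset.sum_congr rfl fun j _ => h j, ← Finset.mul_sum, vand_diag]

lemma inner_two (a v : ℕ) :
    ∑ s ∈ Finset.Icc 1 (v + 2), s * (s - 1) * ((a + 2).choose s * (v + 1).choose (s - 1))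
      = (a + 2) * (a + 1) * (a + v + 1).choose v := by
  rw [sum_Icc_one, Finset.sum_range_succ']
  have h : ∀ j, (j + 1 + 1) * (j + 1 + 1 - 1) * ((a + 2).choose (j + 1 + 1) * (v + 1).choose (j + 1 + 1 - 1))
      = (a + 2) * (a + 1) * (a.choose j * (v + 1).choose (j + 1)) := by
    intro j
    have h1 := Nat.add_one_mul_choose_eq (a + 1) (j + 1)
    have h2 := Nat.add_one_mul_choose_eq a j
    simp only [Nat.succ_eq_add_one, Nat.add_sub_cancel]
    calc (j + 2) * (j + 1) * ((a + 2).choose (j + 2) * (v + 1).choose (j + 1))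
        = ((a + 2).choose (j + 2) * (j + 2)) * (j + 1) * (v + 1).choose (j + 1) := by ring
      _ = ((a + 2) * (a + 1).choose (j + 1)) * (j + 1) * (v + 1).choose (j + 1) := by rw [← h1]
      _ = (a + 2) * ((a + 1).choose (j + 1) * (j + 1)) * (v + 1).choose (j + 1) := by ring
      _ = (a + 2) * ((a + 1) * a.choose j) * (v + 1).choose (j + 1) := by rw [← h2]
      _ = (a + 2) * (a + 1) * (a.choose j * (v + 1).choose (j + 1)) := by ring
  rw [Finset.sum_congr rfl fun j _ => h j, ← Finset.mul_sum, vand_shift]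
  simp

lemma inner_two' (a v : ℕ) :
    ∑ s ∈ Finset.Icc 1 (v + 2), s * (s - 1) * ((a + 1).choose s * (v + 1).choose (s - 1))
      = (a + 1) * a * ((a + v).choose v) := by
  rcases a with _ | b
  · rw [Finset.sum_eq_zero]
    · simp
    · intro s hs
      simp only [Finset.mem_Icc] at hs
      rcases hs with ⟨h1, h2⟩
      match s, h1 with
      | 1, _ => simp
      | (k+2), _ =>
        have : Nat.choose 1 (k + 2) = 0 := Nat.choose_eq_zero_of_lt (by omega)
        simp [this]
  · have := inner_two b v
    rw [show b + 1 + 1 = b + 2 by omega, this]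
    ring_nf

-- binomial sums over ℝ
lemma binA (n : ℕ) (x : ℝ) :
    ∑ k ∈ Finset.range (n + 1), (n.choose k : ℝ) * x ^ k = (1 + x) ^ n := by
  rw [add_comm (1:ℝ) x, add_pow]
  refine Finset.sum_congr rfl fun k hk => ?_
  ring

lemma binB (n : ℕ) (x : ℝ) :
    ∑ k ∈ Finset.range (n + 2), (k : ℝ) * ((n + 1).choose k : ℝ) * x ^ k
      = (n + 1 : ℝ) * x * (1 + x) ^ n := by
  rw [Finset.sum_range_succ']
  have h : ∀ j : ℕ, ((j + 1 : ℕ) : ℝ) * ((n + 1).choose (j + 1) : ℝ) * x ^ (j + 1)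
      = (n + 1 : ℝ) * x * ((n.choose j : ℝ) * x ^ j) := by
    intro j
    have h1 := Nat.add_one_mul_choose_eq n j
    have h2 : ((n + 1) * n.choose j : ℕ) = ((n + 1).choose (j + 1) * (j + 1) : ℕ) := h1
    have h3 : ((n : ℝ) + 1) * (n.choose j : ℝ) = ((n + 1).choose (j + 1) : ℝ) * ((j : ℝ) + 1) := by
      exact_mod_cast congrArg (fun m : ℕ => (m : ℝ)) h2
    push_cast
    calc ((j : ℝ) + 1) * ((n + 1).choose (j + 1) : ℝ) * x ^ (j + 1)
        = (((n + 1).choose (j + 1) : ℝ) * ((j : ℝ) + 1)) * x ^ (j + 1) := by ring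
      _ = (((n : ℝ) + 1) * (n.choose j : ℝ)) * x ^ (j + 1) := by rw [← h3]
      _ = (n + 1 : ℝ) * x * ((n.choose j : ℝ) * x ^ j) := by ring
  rw [Finset.sum_congr rfl fun j _ => h j, ← Finset.mul_sum, binA]
  simp

lemma binC (n : ℕ) (x : ℝ) :
    ∑ k ∈ Finset.range (n + 3), (k : ℝ) * ((k : ℝ) - 1) * ((n + 2).choose k : ℝ) * x ^ k
      = (n + 2 : ℝ) * (n + 1 : ℝ) * x ^ 2 * (1 + x) ^ n := by
  rw [Finset.sum_range_succ', Finset.sum_range_succ']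
  have h : ∀ j : ℕ, ((j + 1 + 1 : ℕ) : ℝ) * (((j + 1 + 1 : ℕ) : ℝ) - 1) * ((n + 2).choose (j + 1 + 1) : ℝ) * x ^ (j + 1 + 1)
      = (n + 2 : ℝ) * (n + 1 : ℝ) * x ^ 2 * ((n.choose j : ℝ) * x ^ j) := by
    intro j
    have h1 : ((n + 2) * (n + 1).choose (j + 1) : ℕ) = ((n + 2).choose (j + 2) * (j + 2) : ℕ) :=
      Nat.add_one_mul_choose_eq (n + 1) (j + 1)
    have h2 : ((n + 1) * n.choose j : ℕ) = ((n + 1).choose (j + 1) * (j + 1) : ℕ) :=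
      Nat.add_one_mul_choose_eq n j
    have h1' : ((n : ℝ) + 2) * ((n + 1).choose (j + 1) : ℝ) = ((n + 2).choose (j + 2) : ℝ) * ((j : ℝ) + 2) := by
      exact_mod_cast congrArg (fun m : ℕ => (m : ℝ)) h1
    have h2' : ((n : ℝ) + 1) * (n.choose j : ℝ) = ((n + 1).choose (j + 1) : ℝ) * ((j : ℝ) + 1) := by
      exact_mod_cast congrArg (fun m : ℕ => (m : ℝ)) h2
    push_cast
    calc ((j : ℝ) + 1 + 1) * ((j : ℝ) + 1 + 1 - 1) * ((n + 2).choose (j + 1 + 1) : ℝ) * x ^ (j + 1 + 1)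
        = (((n + 2).choose (j + 2) : ℝ) * ((j : ℝ) + 2)) * (((j : ℝ) + 1)) * x ^ (j + 2) := by
          ring
      _ = (((n : ℝ) + 2) * ((n + 1).choose (j + 1) : ℝ)) * (((j : ℝ) + 1)) * x ^ (j + 2) := by rw [← h1']
      _ = ((n : ℝ) + 2) * (((n + 1).choose (j + 1) : ℝ) * ((j : ℝ) + 1)) * x ^ (j + 2) := by ring
      _ = ((n : ℝ) + 2) * (((n : ℝ) + 1) * (n.choose j : ℝ)) * x ^ (j + 2) := by rw [← h2']
      _ = (n + 2 : ℝ) * (n + 1 : ℝ) * x ^ 2 * ((n.choose j : ℝ) * x ^ j) := by ring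
  rw [Finset.sum_congr rfl fun j _ => h j, ← Finset.mul_sum, binA]
  push_cast
  ring

lemma reindex (N : ℕ) (G : ℕ → ℕ → ℝ) (hG : ∀ s u, 1 ≤ u → u ≤ N - 1 → 1 ≤ s → N - u < s → G s u = 0) :
    ∑ t ∈ Finset.Icc 1 N, ∑ s ∈ Finset.Icc 1 (t / 2), G s (t - s)
      = ∑ u ∈ Finset.Icc 1 (N - 1), ∑ s ∈ Finset.Icc 1 u, G s u := by
  rw [Finset.sum_sigma' (Finset.Icc 1 N) (fun t => Finset.Icc 1 (t / 2)) (fun t s => G s (t - s)),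
      Finset.sum_sigma' (Finset.Icc 1 (N - 1)) (fun u => Finset.Icc 1 u) (fun u s => G s u)]
  have hsub : Finset.filter (fun p : (_ : ℕ) × ℕ => p.1 + p.2 ≤ N)
        ((Finset.Icc 1 (N - 1)).sigma fun u => Finset.Icc 1 u)
      ⊆ (Finset.Icc 1 (N - 1)).sigma fun u => Finset.Icc 1 u :=
    Finset.filter_subset _ _
  rw [← Finset.sum_subset hsub ?hz]
  case hz =>
    intro p hp hp'
    have h2 : ¬ (p.1 + p.2 ≤ N) := fun hle => hp' (Finset.mem_filter.mpr ⟨hp, hle⟩)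
    simp only [Finset.mem_sigma, Finset.mem_Icc] at hp
    exact hG p.2 p.1 hp.1.1 hp.1.2 hp.2.1 (by omega)
  refine Finset.sum_nbij' (fun p => ⟨p.1 - p.2, p.2⟩) (fun p => ⟨p.1 + p.2, p.2⟩) ?_ ?_ ?_ ?_ ?_
  · intro p hp
    simp only [Finset.mem_sigma, Finset.mem_Icc] at hp
    simp only [Finset.mem_filter, Finset.mem_sigma, Finset.mem_Icc]
    omega
  · intro p hp
    simp only [Finset.mem_filter, Finset.mem_sigma, Finset.mem_Icc] at hp
    simp only [Finset.mem_sigma, Finset.mem_Icc]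
    omega
  · rintro ⟨t, s⟩ hp
    simp only [Finset.mem_sigma, Finset.mem_Icc] at hp
    have hst : t - s + s = t := by omega
    simp [hst]
  · rintro ⟨u, s⟩ hp
    simp only [Finset.mem_filter, Finset.mem_sigma, Finset.mem_Icc] at hp
    simp [Nat.add_sub_cancel]
  · intro p hp
    rfl

lemma key (f : ℕ → ℝ) (N : ℕ) :
    ∑ t ∈ Finset.Icc 1 N, ∑ s ∈ Finset.Icc 1 (t / 2), f s * Ptilde N s t
      = (2/3 : ℝ)^(N-1) * ∑ u ∈ Finset.Icc 1 (N-1), (1/2 : ℝ)^u *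
          ∑ s ∈ Finset.Icc 1 u, f s * ((N - u).choose s : ℝ) * ((u - 1).choose (s - 1) : ℝ) := by
  have step1 : ∑ t ∈ Finset.Icc 1 N, ∑ s ∈ Finset.Icc 1 (t / 2), f s * Ptilde N s t
      = ∑ t ∈ Finset.Icc 1 N, ∑ s ∈ Finset.Icc 1 (t / 2),
          (fun s u => (2/3 : ℝ)^(N-1) * ((1/2 : ℝ)^u *
            (f s * ((N - u).choose s : ℝ) * ((u - 1).choose (s - 1) : ℝ)))) s (t - s) := by
    refine Finset.sum_congr rfl fun t ht => Finset.sum_congr rfl fun s hs => ?_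
    simp only [Finset.mem_Icc] at ht hs
    rw [Ptilde, if_neg (by omega), if_pos ⟨hs.1, hs.2, ht.1, ht.2⟩]
    rw [show N - t + s = N - (t - s) from by omega]
    ring
  rw [step1, reindex N (fun s u => (2/3 : ℝ)^(N-1) * ((1/2 : ℝ)^u *
      (f s * ((N - u).choose s : ℝ) * ((u - 1).choose (s - 1) : ℝ)))) ?_]
  · rw [Finset.mul_sum]
    refine Finset.sum_congr rfl fun u hu => ?_
    rw [Finset.mul_sum, Finset.mul_sum]
  · intro s u h1 h2 h3 h4
    have : (N - u).choose s = 0 := Nat.choose_eq_zero_of_lt h4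
    simp [this]

lemma mean_eq (m : ℕ) : dimerMean (m + 5) = (2 * ((m : ℝ) + 5) - 1) / 9 := by
  rw [dimerMean, key (fun s => (s : ℝ)) (m + 5)]
  rw [show m + 5 - 1 = m + 4 from rfl]
  have hinner : ∀ u ∈ Finset.Icc 1 (m + 4),
      (1/2 : ℝ)^u * ∑ s ∈ Finset.Icc 1 u,
          (s : ℝ) * ((m + 5 - u).choose s : ℝ) * ((u - 1).choose (s - 1) : ℝ)
        = (1/2 : ℝ)^u * (((m + 5 - u) * (m + 3).choose (u - 1) : ℕ) : ℝ) := by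
    intro u hu
    simp only [Finset.mem_Icc] at hu
    obtain ⟨v, rfl⟩ : ∃ v, u = v + 1 := ⟨u - 1, by omega⟩
    congr 1
    have hcast : ∀ s : ℕ, (s : ℝ) * (((m + 5 - (v+1)).choose s : ℕ) : ℝ) * (((v + 1 - 1).choose (s - 1) : ℕ) : ℝ)
        = ((s * ((m + 4 - v).choose s * v.choose (s - 1)) : ℕ) : ℝ) := by
      intro s
      rw [show m + 5 - (v + 1) = m + 4 - v from by omega, show v + 1 - 1 = v from rfl]
      push_cast
      ring
    rw [Finset.sum_congr rfl fun s _ => hcast s, ← Nat.cast_sum]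
    obtain ⟨a, ha⟩ : ∃ a, m + 4 - v = a + 1 := ⟨m + 3 - v, by omega⟩
    rw [ha, inner_one a v]
    have h5 : m + 5 - (v + 1) = a + 1 := by omega
    have h6 : a + v = m + 3 := by omega
    rw [h5, show v + 1 - 1 = v from rfl, ← h6]
  rw [Finset.sum_congr rfl hinner, sum_Icc_one]
  have hterm : ∀ k ∈ Finset.range (m + 4),
      (1/2 : ℝ)^(k+1) * (((m + 5 - (k+1)) * (m + 3).choose (k + 1 - 1) : ℕ) : ℝ)
        = (1/2 : ℝ) * (((m : ℝ) + 4) * (((m + 3).choose k : ℝ) * (1/2 : ℝ)^k)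
            - (k : ℝ) * ((m + 3).choose k : ℝ) * (1/2 : ℝ)^k) := by
    intro k hk
    simp only [Finset.mem_range] at hk
    rw [show m + 5 - (k + 1) = m + 4 - k from by omega, show k + 1 - 1 = k from rfl]
    rw [Nat.cast_mul, Nat.cast_sub (by omega : k ≤ m + 4)]
    push_cast
    ring
  rw [Finset.sum_congr rfl hterm, ← Finset.mul_sum, Finset.sum_sub_distrib, ← Finset.mul_sum]
  rw [binA (m + 3) (1/2), binB (m + 2) (1/2)]
  have hpq : (2/3 : ℝ)^(m+2) * (3/2 : ℝ)^(m+2) = 1 := by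
    rw [← mul_pow]; norm_num
  rw [show ((2:ℝ)/3)^(m+4) = (2/3 : ℝ)^(m+2) * (2/3 : ℝ)^2 from by rw [← pow_add],
      show ((1:ℝ) + 1/2)^(m+3) = (3/2 : ℝ)^(m+2) * (3/2 : ℝ) from by
        norm_num; rw [← pow_succ],
      show ((1:ℝ) + 1/2) = (3/2 : ℝ) from by norm_num]
  push_cast
  linear_combination ((2 * (m:ℝ) + 9) / 9) * hpq

lemma F_eq (m : ℕ) : dimerSecondFactorial (m + 5) = 4 * ((m : ℝ) + 2) * ((m : ℝ) + 4) / 81 := by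
  rw [dimerSecondFactorial, key (fun s => (s : ℝ) * ((s : ℝ) - 1)) (m + 5)]
  rw [show m + 5 - 1 = m + 4 from rfl, sum_Icc_one, Finset.sum_range_succ']
  have h0 : (1/2 : ℝ)^(0+1) * ∑ s ∈ Finset.Icc (1:ℕ) (0+1),
      ((s : ℝ) * ((s : ℝ) - 1)) * ((m + 5 - (0+1)).choose s : ℝ) * (((0+1) - 1).choose (s - 1) : ℝ) = 0 := by
    norm_num
  rw [h0, add_zero]
  have hterm : ∀ j ∈ Finset.range (m + 3),
      (1/2 : ℝ)^(j+1+1) * ∑ s ∈ Finset.Icc 1 (j+1+1),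
          ((s : ℝ) * ((s : ℝ) - 1)) * ((m + 5 - (j+1+1)).choose s : ℝ) * (((j+1+1) - 1).choose (s - 1) : ℝ)
        = (1/4 : ℝ) * (((m : ℝ) + 2) * ((m : ℝ) + 3) * (((m + 2).choose j : ℝ) * (1/2 : ℝ)^j)
            - (2 * (m : ℝ) + 4) * ((j : ℝ) * ((m + 2).choose j : ℝ) * (1/2 : ℝ)^j)
            + (j : ℝ) * ((j : ℝ) - 1) * ((m + 2).choose j : ℝ) * (1/2 : ℝ)^j) := by
    intro j hj
    simp only [Finset.mem_range] at hj
    have hcast : ∀ s ∈ Finset.Icc 1 (j + 2),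
        ((s : ℝ) * ((s : ℝ) - 1)) * ((m + 5 - (j+1+1)).choose s : ℝ) * (((j+1+1) - 1).choose (s - 1) : ℝ)
          = ((s * (s - 1) * (((m + 2 - j) + 1).choose s * (j + 1).choose (s - 1)) : ℕ) : ℝ) := by
      intro s hs
      simp only [Finset.mem_Icc] at hs
      rw [show m + 5 - (j + 1 + 1) = (m + 2 - j) + 1 from by omega,
          show j + 1 + 1 - 1 = j + 1 from rfl]
      rw [Nat.cast_mul, Nat.cast_mul, Nat.cast_mul, Nat.cast_sub hs.1]
      push_cast
      ring
    rw [show j + 1 + 1 = j + 2 from rfl, Finset.sum_congr rfl hcast, ← Nat.cast_sum,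
        inner_two' (m + 2 - j) j]
    rw [Nat.cast_mul, Nat.cast_mul, Nat.cast_add, Nat.cast_sub (by omega : j ≤ m + 2),
        show m + 2 - j + j = m + 2 from by omega]
    push_cast
    ring
  rw [Finset.sum_congr rfl hterm, ← Finset.mul_sum, Finset.sum_add_distrib,
      Finset.sum_sub_distrib, ← Finset.mul_sum, ← Finset.mul_sum]
  rw [binA (m + 2) (1/2), binB (m + 1) (1/2), binC m (1/2)]
  have hpq : (2/3 : ℝ)^m * (3/2 : ℝ)^m = 1 := by
    rw [← mul_pow]; norm_num
  rw [show ((2:ℝ)/3)^(m+4) = (2/3 : ℝ)^m * (2/3 : ℝ)^4 from by rw [← pow_add],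
      show ((1:ℝ) + 1/2)^(m+2) = (3/2 : ℝ)^m * (3/2 : ℝ)^2 from by
        rw [show (1:ℝ) + 1/2 = 3/2 from by norm_num, pow_add],
      show ((1:ℝ) + 1/2)^(m+1) = (3/2 : ℝ)^m * (3/2 : ℝ) from by
        rw [show (1:ℝ) + 1/2 = 3/2 from by norm_num, pow_succ],
      show ((1:ℝ) + 1/2)^m = (3/2 : ℝ)^m from by
        rw [show (1:ℝ) + 1/2 = 3/2 from by norm_num]]
  push_cast
  linear_combination (4 * ((m:ℝ) + 2) * ((m:ℝ) + 4) / 81) * hpq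

/-- the variance `V_N = F_N + E_N - E_N²` of the number of dimers
is asymptotically `(2/81)(3N+1)`. -/
theorem dimer_variance_asymptotics :
    Filter.Tendsto
      (fun N : ℕ =>
        (dimerSecondFactorial N + dimerMean N - (dimerMean N) ^ 2)
          - 2 / 81 * (3 * (N : ℝ) + 1))
      Filter.atTop (nhds 0) := by
  have h : (fun N : ℕ =>
        (dimerSecondFactorial N + dimerMean N - (dimerMean N) ^ 2)
          - 2 / 81 * (3 * (N : ℝ) + 1)) =ᶠ[Filter.atTop] (fun _ => (0 : ℝ)) := by
    filter_upwards [Filter.eventually_ge_atTop 5] with N hN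
    obtain ⟨m, rfl⟩ := Nat.exists_eq_add_of_le hN
    rw [show 5 + m = m + 5 from Nat.add_comm 5 m, mean_eq m, F_eq m]
    push_cast
    ring
  exact Filter.Tendsto.congr' h.symm tendsto_const_nhds
end

section
/- For every integer N ≥ 1, the hard-dimer probability weights sum to one: P̃_N(0,0) + Σ_{t=1}^{N} Σ_{s=1}^{⌊t/2⌋} P̃_N(s,t) = 1; equivalently, Σ_{t=1}^{N} Σ_{s=1}^{⌊t/2⌋} P̃_N(s,t) = 1 - (2/3)^{N-1}. -/
open Finset in
lemma sum_Icc_one_eq_sum_range (n : ℕ) (f : ℕ → ℝ) :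
    ∑ s ∈ Icc 1 n, f s = ∑ i ∈ range n, f (i + 1) := by
  rw [← Finset.Ico_add_one_right_eq_Icc, Finset.sum_Ico_eq_sum_range]
  simp [add_comm]

open Finset in
/-- Vandermonde-type inner identity. -/
lemma inner_vandermonde (m j : ℕ) (hj : 1 ≤ j) :
    ∑ s ∈ Icc 1 j, (m.choose s) * ((j - 1).choose (s - 1)) = (m + (j - 1)).choose j := by
  rw [Nat.add_choose_eq,
    Finset.Nat.sum_antidiagonal_eq_sum_range_succ (fun a b => m.choose a * (j-1).choose b) j,
    Finset.sum_range_succ']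
  have h0 : (j - 1).choose j = 0 := Nat.choose_eq_zero_of_lt (by omega)
  simp only [Nat.sub_zero, h0, Nat.choose_zero_right, one_mul, mul_zero, add_zero]
  rw [← Finset.Ico_add_one_right_eq_Icc, Finset.sum_Ico_eq_sum_range]
  apply Finset.sum_congr rfl
  intro i hi
  simp only [Finset.mem_range] at hi
  have : (j - 1).choose (j - (i + 1)) = (j - 1).choose (1 + i - 1) := by
    have h1 : j - (i + 1) = (j - 1) - (1 + i - 1) := by omega
    rw [h1, Nat.choose_symm (by omega)]
  rw [add_comm 1 i] at this ⊢
  rw [this]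

open Finset in
lemma key_nat_sum (N : ℕ) (hN : 1 ≤ N) :
    ∑ t ∈ Icc 1 N, ∑ s ∈ Icc 1 (t / 2),
        (((N - t + s).choose s : ℝ) * ((t - s - 1).choose (s - 1) : ℝ) * (1 / 2 : ℝ) ^ (t - s))
      = (3 / 2 : ℝ) ^ (N - 1) - 1 := by
  -- reindex (t, s) ↦ (j, s) with j = t - s
  have step1 :
      ∑ t ∈ Icc 1 N, ∑ s ∈ Icc 1 (t / 2),
          (((N - t + s).choose s : ℝ) * ((t - s - 1).choose (s - 1) : ℝ) * (1 / 2 : ℝ) ^ (t - s))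
        = ∑ j ∈ Icc 1 (N - 1), ∑ s ∈ Icc 1 j,
            (((N - j).choose s : ℝ) * ((j - 1).choose (s - 1) : ℝ) * (1 / 2 : ℝ) ^ j) := by
    rw [Finset.sum_sigma', Finset.sum_sigma']
    -- split the target set into the image part and the zero part
    have hzero : ∀ p ∈ ((Icc 1 (N - 1)).sigma fun j => Icc 1 j),
        p ∉ (((Icc 1 (N - 1)).sigma fun j => Icc 1 j).filter fun p => p.1 + p.2 ≤ N) →
        (((N - p.1).choose p.2 : ℝ) * ((p.1 - 1).choose (p.2 - 1) : ℝ) * (1 / 2 : ℝ) ^ p.1) = 0 := by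
      intro p hp hnp
      simp only [Finset.mem_filter, Finset.mem_sigma, Finset.mem_Icc] at hp hnp
      have h : N - p.1 < p.2 := by omega
      rw [Nat.choose_eq_zero_of_lt h]
      simp
    rw [← Finset.sum_filter_add_sum_filter_not
      (((Icc 1 (N - 1)).sigma fun j => Icc 1 j)) (fun p => p.1 + p.2 ≤ N)]
    have hz2 : ∑ p ∈ ((Icc 1 (N - 1)).sigma fun j => Icc 1 j).filter
        (fun p => ¬ p.1 + p.2 ≤ N),
        (((N - p.1).choose p.2 : ℝ) * ((p.1 - 1).choose (p.2 - 1) : ℝ) * (1 / 2 : ℝ) ^ p.1) = 0 := by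
      apply Finset.sum_eq_zero
      intro p hp
      simp only [Finset.mem_filter, Finset.mem_sigma, Finset.mem_Icc] at hp
      have h : N - p.1 < p.2 := by omega
      rw [Nat.choose_eq_zero_of_lt h]
      simp
    rw [hz2, add_zero]
    apply Finset.sum_nbij' (fun p => ⟨p.1 - p.2, p.2⟩) (fun p => ⟨p.1 + p.2, p.2⟩)
    · intro p hp
      simp only [Finset.mem_sigma, Finset.mem_Icc] at hp
      have h2 : 2 * p.2 ≤ p.1 := by omega
      simp only [Finset.mem_filter, Finset.mem_sigma, Finset.mem_Icc]
      refine ⟨⟨⟨by omega, by omega⟩, by omega, by omega⟩, by omega⟩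
    · intro p hp
      simp only [Finset.mem_filter, Finset.mem_sigma, Finset.mem_Icc] at hp
      simp only [Finset.mem_sigma, Finset.mem_Icc]
      refine ⟨⟨by omega, by omega⟩, by omega, ?_⟩
      rw [Nat.le_div_iff_mul_le (by norm_num)]
      omega
    · intro p hp
      simp only [Finset.mem_sigma, Finset.mem_Icc] at hp
      have h2 : 2 * p.2 ≤ p.1 := by omega
      have : p.1 - p.2 + p.2 = p.1 := by omega
      exact Sigma.ext this (by simp)
    · intro p hp
      have : p.1 + p.2 - p.2 = p.1 := by omega
      exact Sigma.ext this (by simp)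
    · intro p hp
      simp only [Finset.mem_sigma, Finset.mem_Icc] at hp
      have h2 : 2 * p.2 ≤ p.1 := by omega
      have e1 : N - (p.1 - p.2) = N - p.1 + p.2 := by omega
      have e2 : p.1 - p.2 - 1 = p.1 - p.2 - 1 := rfl
      rw [e1]
  rw [step1]
  -- now apply Vandermonde on the inner sum
  have step2 : ∀ j ∈ Icc 1 (N - 1),
      ∑ s ∈ Icc 1 j,
          (((N - j).choose s : ℝ) * ((j - 1).choose (s - 1) : ℝ) * (1 / 2 : ℝ) ^ j)
        = ((N - 1).choose j : ℝ) * (1 / 2 : ℝ) ^ j := by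
    intro j hj
    simp only [Finset.mem_Icc] at hj
    have hv := inner_vandermonde (N - j) j hj.1
    have hNm : N - j + (j - 1) = N - 1 := by omega
    rw [hNm] at hv
    calc ∑ s ∈ Icc 1 j, (((N - j).choose s : ℝ) * ((j - 1).choose (s - 1) : ℝ) * (1 / 2 : ℝ) ^ j)
        = (↑(∑ s ∈ Icc 1 j, (N - j).choose s * (j - 1).choose (s - 1)) : ℝ) * (1 / 2 : ℝ) ^ j := by
          rw [Nat.cast_sum, Finset.sum_mul]
          apply Finset.sum_congr rfl
          intro s _
          push_cast
          ring
      _ = ((N - 1).choose j : ℝ) * (1 / 2 : ℝ) ^ j := by rw [hv]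
  rw [Finset.sum_congr rfl step2]
  -- binomial theorem
  have hbin : ((1 / 2 : ℝ) + 1) ^ (N - 1)
      = ∑ j ∈ Finset.range (N - 1 + 1), ((N - 1).choose j : ℝ) * (1 / 2 : ℝ) ^ j := by
    rw [add_pow]
    apply Finset.sum_congr rfl
    intro j _
    simp [mul_comm]
  have : ∑ j ∈ Icc 1 (N - 1), ((N - 1).choose j : ℝ) * (1 / 2 : ℝ) ^ j
      = ((1 / 2 : ℝ) + 1) ^ (N - 1) - 1 := by
    rw [hbin, Finset.sum_range_succ', sum_Icc_one_eq_sum_range]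
    simp
  rw [this]
  norm_num

/-- the hard-dimer probability weights sum to one. -/
theorem Ptilde_sum_to_one (N : ℕ) (hN : 1 ≤ N) :
    Ptilde N 0 0 + ∑ t ∈ Finset.Icc 1 N, ∑ s ∈ Finset.Icc 1 (t / 2), Ptilde N s t = 1 := by
  have h00 : Ptilde N 0 0 = (2 / 3 : ℝ) ^ (N - 1) := by simp [Ptilde]
  have hterm : ∀ t ∈ Finset.Icc 1 N, ∀ s ∈ Finset.Icc 1 (t / 2),
      Ptilde N s t = (2 / 3 : ℝ) ^ (N - 1) *
        (((N - t + s).choose s : ℝ) * ((t - s - 1).choose (s - 1) : ℝ) * (1 / 2 : ℝ) ^ (t - s)) := by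
    intro t ht s hs
    simp only [Finset.mem_Icc] at ht hs
    rw [Ptilde, if_neg (by omega), if_pos ⟨hs.1, hs.2, ht.1, ht.2⟩]
    ring
  have hsum : ∑ t ∈ Finset.Icc 1 N, ∑ s ∈ Finset.Icc 1 (t / 2), Ptilde N s t
      = (2 / 3 : ℝ) ^ (N - 1) * ((3 / 2 : ℝ) ^ (N - 1) - 1) := by
    rw [← key_nat_sum N hN, Finset.mul_sum]
    apply Finset.sum_congr rfl
    intro t ht
    rw [Finset.mul_sum]
    exact Finset.sum_congr rfl (fun s hs => hterm t ht s hs)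
  rw [h00, hsum]
  have h23 : (2 / 3 : ℝ) ^ (N - 1) * (3 / 2 : ℝ) ^ (N - 1) = 1 := by
    rw [← mul_pow]
    norm_num
  ring_nf
  nlinarith [h23]
end
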